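/- For natural numbers n ≥ 2 and j with 2j+1 ≤ n−1 and n ≥ 2j+3, the terminating sum ∑_{k=0}^{j} [(−n+1)_k (−j−1/2)_k (−j)_k] / [((−n+1)/2 − j)_k (1−j−n/2)_k · k!] = −(1−n)_{2j+1}/(n−1)_{2j+1} in ℚ, and consequently C(n+2j−1, 2j+1) · (−(1−n)_{2j+1}/(n−1)_{2j+1}) = C(n−1, 2j+1). -/

import Mathlib

def poch (x : ℚ) : ℕ → ℚ
  | 0 => 1
  | k + 1 => poch x k * (x + k)

lemma poch_succ (x : ℚ) (k : ℕ) : poch x (k+1) = poch x k * (x + k) := rfl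

lemma poch_succ_left (x : ℚ) : ∀ k : ℕ, poch x (k+1) = x * poch (x+1) k := by
  intro k
  induction k with
  | zero => simp [poch]
  | succ m ih =>
    rw [poch_succ, ih, poch_succ]
    push_cast
    ring

lemma poch_shift (x : ℚ) (k : ℕ) : poch x k * (x + k) = x * poch (x+1) k := by
  rw [← poch_succ, poch_succ_left]

lemma poch_ne_zero (x : ℚ) : ∀ k : ℕ, (∀ i : ℕ, i < k → x + i ≠ 0) → poch x k ≠ 0 := by
  intro k
  induction k with
  | zero => intro _; simp [poch]
  | succ m ih =>
    intro h
    rw [poch_succ]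
    exact mul_ne_zero (ih fun i hi => h i (Nat.lt_succ_of_lt hi)) (h m (Nat.lt_succ_self m))

def Tm (n j k : ℕ) : ℚ :=
  poch (-(n : ℚ) + 1) k * poch (-(j : ℚ) - 1 / 2) k * poch (-(j : ℚ)) k
    / (poch ((-(n : ℚ) + 1) / 2 - (j : ℚ)) k * poch (1 - (j : ℚ) - (n : ℚ) / 2) k
        * (Nat.factorial k : ℚ))

set_option maxHeartbeats 1000000 in
lemma key (n j k : ℕ) (hn : 2*j+5 ≤ n) (hk : k ≤ j+1) :
    ((n:ℚ)+2*j)*((n:ℚ)+2*j+1) * (((j:ℚ)+1)*(2*(j:ℚ)+3)) * Tm n (j+1) k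
      - ((n:ℚ)-2*j-2)*((n:ℚ)-2*j-3) * (((j:ℚ)+1)*(2*(j:ℚ)+3)) * Tm n j k
    = ((k:ℚ)+1)*(2*((k:ℚ)+1)-(4*(j:ℚ)+5)) * (((n:ℚ)+2*j)*((n:ℚ)+2*j+1)) * Tm n (j+1) (k+1)
      - (k:ℚ)*(2*(k:ℚ)-(4*(j:ℚ)+5)) * (((n:ℚ)+2*j)*((n:ℚ)+2*j+1)) * Tm n (j+1) k := by
  have hnq : (2*(j:ℚ)+5) ≤ (n:ℚ) := by exact_mod_cast hn
  have hkq : (k:ℚ) ≤ (j:ℚ)+1 := by exact_mod_cast hk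
  have hj0 : (0:ℚ) ≤ (j:ℚ) := Nat.cast_nonneg j
  have hx2 : (-(j:ℚ)-3/2) ≠ 0 := by intro h; linarith
  have hx3 : (-(j:ℚ)-1) ≠ 0 := by intro h; linarith
  have hx4 : ((-(n:ℚ)+1)/2 - (j:ℚ) - 1) ≠ 0 := by intro h; linarith
  have hx5 : (-(j:ℚ) - (n:ℚ)/2) ≠ 0 := by intro h; linarith
  have hD : poch ((-(n:ℚ)+1)/2 - (j:ℚ) - 1) k ≠ 0 := by
    apply poch_ne_zero
    intro i hi
    have hiq : (i:ℚ) ≤ (j:ℚ) := by exact_mod_cast (by omega : i ≤ j)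
    intro h; linarith
  have hE : poch (-(j:ℚ) - (n:ℚ)/2) k ≠ 0 := by
    apply poch_ne_zero
    intro i hi
    have hiq : (i:ℚ) ≤ (j:ℚ) := by exact_mod_cast (by omega : i ≤ j)
    intro h; linarith
  have hDj : poch ((-(n:ℚ)+1)/2 - (j:ℚ)) k ≠ 0 := by
    apply poch_ne_zero
    intro i hi
    have hiq : (i:ℚ) ≤ (j:ℚ) := by exact_mod_cast (by omega : i ≤ j)
    intro h; linarith
  have hEj : poch (1 - (j:ℚ) - (n:ℚ)/2) k ≠ 0 := by
    apply poch_ne_zero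
    intro i hi
    have hiq : (i:ℚ) ≤ (j:ℚ) := by exact_mod_cast (by omega : i ≤ j)
    intro h; linarith
  have hD1 : ((-(n:ℚ)+1)/2 - (j:ℚ) - 1 + (k:ℚ)) ≠ 0 := by intro h; linarith
  have hE1 : (-(j:ℚ) - (n:ℚ)/2 + (k:ℚ)) ≠ 0 := by intro h; linarith
  have hf : ((Nat.factorial k : ℕ) : ℚ) ≠ 0 := Nat.cast_ne_zero.mpr (Nat.factorial_ne_zero k)
  have hk1 : ((k:ℚ)+1) ≠ 0 := by positivity
  have hfk1 : ((Nat.factorial (k+1) : ℕ) : ℚ) = (Nat.factorial k : ℚ) * ((k:ℚ)+1) := by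
    rw [Nat.factorial_succ]; push_cast; ring
  -- poch shift relations
  have hB := poch_shift (-(j:ℚ)-3/2) k
  rw [show (-(j:ℚ)-3/2+1) = -(j:ℚ)-1/2 from by ring] at hB
  have hC := poch_shift (-(j:ℚ)-1) k
  rw [show (-(j:ℚ)-1+1) = -(j:ℚ) from by ring] at hC
  have hDs := poch_shift ((-(n:ℚ)+1)/2 - (j:ℚ) - 1) k
  rw [show ((-(n:ℚ)+1)/2 - (j:ℚ) - 1 + 1) = (-(n:ℚ)+1)/2 - (j:ℚ) from by ring] at hDs
  have hEs := poch_shift (-(j:ℚ) - (n:ℚ)/2) k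
  rw [show (-(j:ℚ) - (n:ℚ)/2 + 1) = 1 - (j:ℚ) - (n:ℚ)/2 from by ring] at hEs
  -- ratio lemmas
  have hU2 : Tm n (j+1) (k+1) * (((-(n:ℚ)+1)/2 - (j:ℚ) - 1 + (k:ℚ)) * (-(j:ℚ) - (n:ℚ)/2 + (k:ℚ)) * ((k:ℚ)+1))
      = Tm n (j+1) k * ((-(n:ℚ)+1+(k:ℚ)) * (-(j:ℚ)-3/2+(k:ℚ)) * (-(j:ℚ)-1+(k:ℚ))) := by
    unfold Tm
    push_cast
    rw [show (-((j:ℚ)+1) - 1/2) = -(j:ℚ)-3/2 from by ring,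
        show (-((j:ℚ)+1)) = -(j:ℚ)-1 from by ring,
        show ((-(n:ℚ)+1)/2 - ((j:ℚ)+1)) = (-(n:ℚ)+1)/2 - (j:ℚ) - 1 from by ring,
        show (1 - ((j:ℚ)+1) - (n:ℚ)/2) = -(j:ℚ) - (n:ℚ)/2 from by ring]
    rw [poch_succ (-(n:ℚ)+1) k, poch_succ (-(j:ℚ)-3/2) k, poch_succ (-(j:ℚ)-1) k,
        poch_succ ((-(n:ℚ)+1)/2 - (j:ℚ) - 1) k, poch_succ (-(j:ℚ) - (n:ℚ)/2) k, hfk1]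
    rw [div_mul_eq_mul_div, div_mul_eq_mul_div,
        div_eq_div_iff (by exact mul_ne_zero (mul_ne_zero (mul_ne_zero hD hD1) (mul_ne_zero hE hE1)) (mul_ne_zero hf hk1))
          (by exact mul_ne_zero (mul_ne_zero hD hE) hf)]
    ring
  have hU1 : Tm n j k * ((-(j:ℚ)-3/2) * (-(j:ℚ)-1) * (((-(n:ℚ)+1)/2 - (j:ℚ) - 1 + (k:ℚ)) * (-(j:ℚ) - (n:ℚ)/2 + (k:ℚ))))
      = Tm n (j+1) k * ((-(j:ℚ)-3/2+(k:ℚ)) * (-(j:ℚ)-1+(k:ℚ)) * (((-(n:ℚ)+1)/2 - (j:ℚ) - 1) * (-(j:ℚ) - (n:ℚ)/2))) := by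
    unfold Tm
    push_cast
    rw [show (-((j:ℚ)+1) - 1/2) = -(j:ℚ)-3/2 from by ring,
        show (-((j:ℚ)+1)) = -(j:ℚ)-1 from by ring,
        show ((-(n:ℚ)+1)/2 - ((j:ℚ)+1)) = (-(n:ℚ)+1)/2 - (j:ℚ) - 1 from by ring,
        show (1 - ((j:ℚ)+1) - (n:ℚ)/2) = -(j:ℚ) - (n:ℚ)/2 from by ring]
    rw [div_mul_eq_mul_div, div_mul_eq_mul_div,
        div_eq_div_iff (by exact mul_ne_zero (mul_ne_zero hDj hEj) hf)
          (by exact mul_ne_zero (mul_ne_zero hD hE) hf)]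
    have hBC : (poch (-(j:ℚ)-3/2) k * (-(j:ℚ)-3/2+(k:ℚ))) * (poch (-(j:ℚ)-1) k * (-(j:ℚ)-1+(k:ℚ)))
        = ((-(j:ℚ)-3/2) * poch (-(j:ℚ)-1/2) k) * ((-(j:ℚ)-1) * poch (-(j:ℚ)) k) := by
      rw [hB, hC]
    have hDE : (poch ((-(n:ℚ)+1)/2 - (j:ℚ) - 1) k * ((-(n:ℚ)+1)/2 - (j:ℚ) - 1 + (k:ℚ))) * (poch (-(j:ℚ) - (n:ℚ)/2) k * (-(j:ℚ) - (n:ℚ)/2 + (k:ℚ)))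
        = (((-(n:ℚ)+1)/2 - (j:ℚ) - 1) * poch ((-(n:ℚ)+1)/2 - (j:ℚ)) k) * ((-(j:ℚ) - (n:ℚ)/2) * poch (1 - (j:ℚ) - (n:ℚ)/2) k) := by
      rw [hDs, hEs]
    linear_combination
      (-(poch (-(n:ℚ)+1) k * (Nat.factorial k : ℚ) * ((-(n:ℚ)+1)/2 - (j:ℚ) - 1 + (k:ℚ)) * (-(j:ℚ) - (n:ℚ)/2 + (k:ℚ)) * poch ((-(n:ℚ)+1)/2 - (j:ℚ) - 1) k * poch (-(j:ℚ) - (n:ℚ)/2) k)) * hBC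
      + (poch (-(n:ℚ)+1) k * (Nat.factorial k : ℚ) * poch (-(j:ℚ)-3/2) k * poch (-(j:ℚ)-1) k * (-(j:ℚ)-3/2+(k:ℚ)) * (-(j:ℚ)-1+(k:ℚ))) * hDE
  have hM : ((-(j:ℚ)-3/2) * (-(j:ℚ)-1) * (((-(n:ℚ)+1)/2 - (j:ℚ) - 1 + (k:ℚ)) * (-(j:ℚ) - (n:ℚ)/2 + (k:ℚ)))
      * (((-(n:ℚ)+1)/2 - (j:ℚ) - 1 + (k:ℚ)) * (-(j:ℚ) - (n:ℚ)/2 + (k:ℚ)) * ((k:ℚ)+1))) ≠ 0 := by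
    exact mul_ne_zero (mul_ne_zero (mul_ne_zero hx2 hx3) (mul_ne_zero hD1 hE1))
      (mul_ne_zero (mul_ne_zero hD1 hE1) hk1)
  apply mul_right_cancel₀ hM
  linear_combination
    (-(((n:ℚ)-2*j-2)*((n:ℚ)-2*j-3) * (((j:ℚ)+1)*(2*(j:ℚ)+3)) * (((-(n:ℚ)+1)/2 - (j:ℚ) - 1 + (k:ℚ)) * (-(j:ℚ) - (n:ℚ)/2 + (k:ℚ)) * ((k:ℚ)+1)))) * hU1
    + (-(((k:ℚ)+1)*(2*((k:ℚ)+1)-(4*(j:ℚ)+5)) * (((n:ℚ)+2*j)*((n:ℚ)+2*j+1)) * ((-(j:ℚ)-3/2) * (-(j:ℚ)-1) * (((-(n:ℚ)+1)/2 - (j:ℚ) - 1 + (k:ℚ)) * (-(j:ℚ) - (n:ℚ)/2 + (k:ℚ)))))) * hU2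

lemma Tm_last (n j : ℕ) : Tm n j (j+1) = 0 := by
  unfold Tm
  rw [poch_succ (-(j:ℚ)) j]
  simp

lemma main : ∀ j n : ℕ, 2 ≤ n → 2*j+3 ≤ n →
    (∑ k ∈ Finset.range (j+1), Tm n j k)
      = -(poch (1 - (n:ℚ)) (2*j+1) / poch ((n:ℚ)-1) (2*j+1)) := by
  intro j
  induction j with
  | zero =>
    intro n hn _
    have hne : (n:ℚ) - 1 ≠ 0 := by
      have : (2:ℚ) ≤ (n:ℚ) := by exact_mod_cast hn
      intro h; linarith
    rw [Finset.sum_range_one]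
    rw [show 2*0+1 = 0+1 from rfl, poch_succ (1-(n:ℚ)), poch_succ ((n:ℚ)-1)]
    simp [Tm, poch]
    field_simp
    ring
  | succ j ih =>
    intro n hn h5
    have h3 : 2*j+3 ≤ n := by omega
    have hn5 : 2*j+5 ≤ n := by omega
    have hS := ih n hn h3
    have hnq : (2*(j:ℚ)+5) ≤ (n:ℚ) := by exact_mod_cast hn5
    have hj0 : (0:ℚ) ≤ (j:ℚ) := Nat.cast_nonneg j
    have hcd : ((n:ℚ)+2*j)*((n:ℚ)+2*j+1) ≠ 0 := by
      have h1 : ((n:ℚ)+2*j) ≠ 0 := by intro h; linarith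
      have h2 : ((n:ℚ)+2*j+1) ≠ 0 := by intro h; linarith
      exact mul_ne_zero h1 h2
    have hqd : (((j:ℚ)+1)*(2*(j:ℚ)+3)) ≠ 0 := by positivity
    have hR : ∀ m : ℕ, poch ((n:ℚ)-1) m ≠ 0 := by
      intro m
      apply poch_ne_zero
      intro i _
      have : (0:ℚ) ≤ (i:ℚ) := Nat.cast_nonneg i
      intro h; linarith
    have hsum : ∑ k ∈ Finset.range (j+2),
        (((n:ℚ)+2*j)*((n:ℚ)+2*j+1) * (((j:ℚ)+1)*(2*(j:ℚ)+3)) * Tm n (j+1) k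
          - ((n:ℚ)-2*j-2)*((n:ℚ)-2*j-3) * (((j:ℚ)+1)*(2*(j:ℚ)+3)) * Tm n j k)
        = ∑ k ∈ Finset.range (j+2),
            ((fun k : ℕ => (k:ℚ)*(2*(k:ℚ)-(4*(j:ℚ)+5)) * (((n:ℚ)+2*j)*((n:ℚ)+2*j+1)) * Tm n (j+1) k) (k+1)
              - (fun k : ℕ => (k:ℚ)*(2*(k:ℚ)-(4*(j:ℚ)+5)) * (((n:ℚ)+2*j)*((n:ℚ)+2*j+1)) * Tm n (j+1) k) k) := by
      refine Finset.sum_congr rfl fun k hk => ?_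
      have hk2 : k ≤ j+1 := by
        have := Finset.mem_range.mp hk; omega
      have := key n j k hn5 hk2
      push_cast
      linear_combination this
    rw [Finset.sum_range_sub
      (fun k : ℕ => (k:ℚ)*(2*(k:ℚ)-(4*(j:ℚ)+5)) * (((n:ℚ)+2*j)*((n:ℚ)+2*j+1)) * Tm n (j+1) k) (j+2)] at hsum
    rw [Tm_last n (j+1)] at hsum
    rw [Finset.sum_sub_distrib, ← Finset.mul_sum, ← Finset.mul_sum] at hsum
    rw [Finset.sum_range_succ (fun k => Tm n j k) (j+1), Tm_last n j, add_zero, hS] at hsum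
    simp only [Nat.cast_zero, mul_zero, zero_mul, sub_zero] at hsum
    -- now hsum : cd*qd*S1 - cn*qd*(-(P/R)) = 0 (roughly)
    rw [show 2*(j+1)+1 = (2*j+1)+1+1 from by ring,
        poch_succ (1-(n:ℚ)), poch_succ (1-(n:ℚ)), poch_succ ((n:ℚ)-1), poch_succ ((n:ℚ)-1)]
    have hRj := hR (2*j+1)
    field_simp at hsum
    push_cast at hsum
    rw [show j+1+1 = j+2 from rfl]
    have hg1 : ((n:ℚ)-1+((2*j+1 : ℕ):ℚ)) ≠ 0 := by push_cast; intro h; linarith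
    have hg2 : ((n:ℚ)-1+((2*j+1+1 : ℕ):ℚ)) ≠ 0 := by push_cast; intro h; linarith
    have hDen : poch ((n:ℚ)-1) (2*j+1) * (((n:ℚ)-1)+((2*j+1:ℕ):ℚ)) * (((n:ℚ)-1)+((2*j+1+1:ℕ):ℚ)) ≠ 0 :=
      mul_ne_zero (mul_ne_zero hRj hg1) hg2
    apply mul_left_cancel₀ hqd
    rw [← neg_div, ← mul_div_assoc, eq_div_iff hDen]
    push_cast
    linear_combination hsum

lemma poch_neg (x : ℚ) : ∀ m : ℕ, poch (-x) m = (-1)^m * poch (x - m + 1) m := by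
  intro m
  induction m generalizing x with
  | zero => simp [poch]
  | succ k ih =>
    rw [poch_succ, ih]
    have h2 : x - (k+1:ℕ) + 1 = (x - 1) - (k:ℕ) + 1 := by push_cast; ring
    rw [h2, poch_succ_left]
    have h3 : ((x-1)-(k:ℕ)+1) + 1 = x - k + 1 := by ring
    rw [h3]
    push_cast
    ring

lemma poch_factorial (a : ℕ) : ∀ m : ℕ, poch ((a:ℚ)+1) m = (Nat.factorial (a+m) : ℚ) / (Nat.factorial a : ℚ) := by
  intro m
  induction m with
  | zero =>
    have hf : (Nat.factorial a : ℚ) ≠ 0 := by positivity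
    simp [poch, div_self hf]
  | succ k ih =>
    rw [poch_succ, ih]
    have h : a + (k+1) = (a+k) + 1 := by ring
    rw [h, Nat.factorial_succ]
    have hf : (Nat.factorial a : ℚ) ≠ 0 := by positivity
    push_cast
    field_simp
    ring

lemma part2 (n j : ℕ) (hn : 2 ≤ n) (h3 : 2*j+3 ≤ n) :
    (Nat.choose (n + 2*j - 1) (2*j+1) : ℚ)
        * (-(poch (1 - (n:ℚ)) (2*j+1) / poch ((n:ℚ)-1) (2*j+1)))
      = (Nat.choose (n-1) (2*j+1) : ℚ) := by
  have hc1 : ((n - 2*j - 2 : ℕ) : ℚ) = (n:ℚ) - 2*j - 2 := by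
    have h : (n - 2*j - 2) + (2*j+2) = n := by omega
    have := congrArg (Nat.cast : ℕ → ℚ) h
    push_cast at this
    linarith
  have hc2 : ((n - 2 : ℕ) : ℚ) = (n:ℚ) - 2 := by
    have h : (n-2) + 2 = n := by omega
    have := congrArg (Nat.cast : ℕ → ℚ) h
    push_cast at this; linarith
  have e1 : poch (1 - (n:ℚ)) (2*j+1)
      = -(((n-1).factorial : ℚ) / ((n - 2*j - 2).factorial : ℚ)) := by
    rw [show (1 - (n:ℚ)) = -((n:ℚ)-1) from by ring, poch_neg]
    have harg : ((n:ℚ)-1) - ((2*j+1 : ℕ):ℚ) + 1 = ((n - 2*j - 2 : ℕ) : ℚ) + 1 := by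
      rw [hc1]; push_cast; ring
    rw [harg, poch_factorial, show (n - 2*j - 2) + (2*j+1) = n - 1 from by omega]
    have hodd : (-1 : ℚ)^(2*j+1) = -1 := Odd.neg_one_pow ⟨j, by ring⟩
    rw [hodd]; ring
  have e2 : poch ((n:ℚ)-1) (2*j+1) = ((n + 2*j - 1).factorial : ℚ) / ((n-2).factorial : ℚ) := by
    rw [show ((n:ℚ)-1) = ((n-2:ℕ):ℚ) + 1 from by rw [hc2]; ring, poch_factorial,
        show (n-2) + (2*j+1) = n + 2*j - 1 from by omega]
  have k1 : ((n+2*j-1).choose (2*j+1) : ℚ) * ((2*j+1).factorial : ℚ) * ((n-2).factorial : ℚ)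
      = ((n+2*j-1).factorial : ℚ) := by
    have h := Nat.choose_mul_factorial_mul_factorial (show 2*j+1 ≤ n+2*j-1 by omega)
    rw [show n+2*j-1 - (2*j+1) = n-2 from by omega] at h
    exact_mod_cast h
  have k2 : ((n-1).choose (2*j+1) : ℚ) * ((2*j+1).factorial : ℚ) * ((n - 2*j - 2).factorial : ℚ)
      = ((n-1).factorial : ℚ) := by
    have h := Nat.choose_mul_factorial_mul_factorial (show 2*j+1 ≤ n-1 by omega)
    rw [show n-1 - (2*j+1) = n - 2*j - 2 from by omega] at h
    exact_mod_cast h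
  have f0 : ((n - 2*j - 2).factorial : ℚ) ≠ 0 := by positivity
  have f2 : ((n-2).factorial : ℚ) ≠ 0 := by positivity
  have f3 : ((n+2*j-1).factorial : ℚ) ≠ 0 := by positivity
  have f4 : (((2*j+1).factorial) : ℚ) ≠ 0 := by positivity
  rw [e1, e2]
  have expr : (-(-(((n-1).factorial : ℚ) / ((n - 2*j - 2).factorial : ℚ))
        / (((n + 2*j - 1).factorial : ℚ) / ((n-2).factorial : ℚ))))
      = (((n-1).factorial : ℚ) * ((n-2).factorial : ℚ))
          / (((n - 2*j - 2).factorial : ℚ) * ((n + 2*j - 1).factorial : ℚ)) := by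
    field_simp
  rw [expr, ← mul_div_assoc, div_eq_iff (mul_ne_zero f0 f3)]
  apply mul_right_cancel₀ f4
  linear_combination
    (-(((n+2*j-1).choose (2*j+1) : ℚ) * ((n-2).factorial : ℚ) * (((2*j+1).factorial) : ℚ))) * k2
    + (((n-1).choose (2*j+1) : ℚ) * ((n - 2*j - 2).factorial : ℚ) * (((2*j+1).factorial) : ℚ)) * k1

/-- Odd case of Theorem 2(2): I_{2j+1,n}(n−1) = C(n−1, 2j+1). -/
theorem dimension_odd_almost_full (n j : ℕ) (hn : 2 ≤ n) (h2 : 2 * j + 1 ≤ n - 1)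
    (h3 : n ≥ 2 * j + 3) :
    (∑ k ∈ Finset.range (j + 1),
          poch (-(n : ℚ) + 1) k * poch (-(j : ℚ) - 1 / 2) k * poch (-(j : ℚ)) k
            / (poch ((-(n : ℚ) + 1) / 2 - (j : ℚ)) k * poch (1 - (j : ℚ) - (n : ℚ) / 2) k
                * (Nat.factorial k : ℚ))
        = -(poch (1 - (n : ℚ)) (2 * j + 1) / poch ((n : ℚ) - 1) (2 * j + 1)))
    ∧ (Nat.choose (n + 2 * j - 1) (2 * j + 1) : ℚ)
          * (-(poch (1 - (n : ℚ)) (2 * j + 1) / poch ((n : ℚ) - 1) (2 * j + 1)))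
        = (Nat.choose (n - 1) (2 * j + 1) : ℚ) := by
  constructor
  · simpa only [Tm] using main j n hn (by omega)
  · exact part2 n j hn (by omega)
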